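/- Let d ≥ 1 and let p_t(x,y) = Σ_{n=0}^∞ e^{−2dt} (2dt)^n / n! · q_n(y − x) be the transition probabilities of the continuous-time simple random walk on ℤ^d. Then p_t(𝟎,𝟎) = Θ(t^{−d/2}) as t → ∞; that is, there exist constants 0 < c ≤ C < ∞ such that c t^{−d/2} ≤ p_t(𝟎,𝟎) ≤ C t^{−d/2} for all t ≥ 1. -/

import Mathlib

open Real MeasureTheory Filter

/-- `n`-step distribution of the discrete-time simple random walk on `ℤ^d`:
`q 0 = δ₀` and `q (n+1) z = (2d)⁻¹ ∑_{e : ‖e‖₁ = 1} q n (z - e)`, the set of `e` with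
`‖e‖₁ = 1` being the `2d` vectors `± eᵢ`. -/
noncomputable def srwStep (d : ℕ) : ℕ → (Fin d → ℤ) → ℝ
  | 0, z => if z = 0 then 1 else 0
  | n + 1, z =>
      (2 * d : ℝ)⁻¹ *
        ∑ i : Fin d, (srwStep d n (z - Pi.single i 1) + srwStep d n (z + Pi.single i 1))

/-- Transition probabilities `p_t(x,y) = ∑_{n} e^{-2dt} (2dt)^n / n! ⬝ q_n (y - x)` of the
continuous-time simple random walk on `ℤ^d`. -/
noncomputable def srwP (d : ℕ) (t : ℝ) (x y : Fin d → ℤ) : ℝ :=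
  ∑' n : ℕ, Real.exp (-(2 * d) * t) * (2 * d * t) ^ n / (n.factorial : ℝ) * srwStep d n (y - x)

namespace SRWAux

def box (d : ℕ) : Set (Fin d → ℝ) := Set.univ.pi fun _ => Set.Icc (-π) π

lemma measurableSet_box (d : ℕ) : MeasurableSet (box d) :=
  MeasurableSet.univ_pi fun _ => measurableSet_Icc

lemma isCompact_box (d : ℕ) : IsCompact (box d) :=
  isCompact_univ_pi fun _ => isCompact_Icc

noncomputable def psi (d : ℕ) (θ : Fin d → ℝ) : ℝ := ∑ i, Real.cos (θ i)

noncomputable def KK (d : ℕ) (z : Fin d → ℤ) (θ : Fin d → ℝ) : ℝ :=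
  ∏ i, Real.cos (θ i * (z i : ℝ))

lemma cont_psi (d : ℕ) : Continuous (psi d) :=
  continuous_finset_sum _ fun i _ => Real.continuous_cos.comp (continuous_apply i)

lemma cont_KK (d : ℕ) (z : Fin d → ℤ) : Continuous (KK d z) :=
  continuous_finset_prod _ fun i _ =>
    Real.continuous_cos.comp ((continuous_apply i).mul continuous_const)

lemma integrableOn_box {d : ℕ} {f : (Fin d → ℝ) → ℝ} (hf : Continuous f) :
    IntegrableOn f (box d) :=
  hf.continuousOn.integrableOn_compact (isCompact_box d)

lemma abs_psi_le (d : ℕ) (θ : Fin d → ℝ) : |psi d θ| ≤ d := by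
  refine (Finset.abs_sum_le_sum_abs _ _).trans ?_
  calc ∑ i : Fin d, |Real.cos (θ i)| ≤ ∑ _i : Fin d, (1 : ℝ) :=
        Finset.sum_le_sum fun i _ => Real.abs_cos_le_one _
    _ = d := by simp

lemma integral_cos_int (m : ℤ) :
    ∫ x in Set.Icc (-π) π, Real.cos (x * (m : ℝ)) = if m = 0 then 2 * π else 0 := by
  have hle : -π ≤ π := by linarith [pi_pos]
  rw [MeasureTheory.integral_Icc_eq_integral_Ioc, ← intervalIntegral.integral_of_le hle]
  by_cases hm : m = 0
  · simp [hm, two_mul]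
  · have hm' : (m : ℝ) ≠ 0 := Int.cast_ne_zero.mpr hm
    rw [if_neg hm, intervalIntegral.integral_comp_mul_right Real.cos hm', integral_cos]
    have h1 : Real.sin (π * m) = 0 := by rw [mul_comm]; exact Real.sin_int_mul_pi m
    have h2 : Real.sin (-π * m) = 0 := by
      rw [show (-π) * m = -(π * m) by ring, Real.sin_neg, h1, neg_zero]
    simp [h1, h2]

lemma integral_box_prod (d : ℕ) (G : Fin d → ℝ → ℝ) :
    ∫ θ in box d, ∏ i, G i (θ i) = ∏ i, ∫ x in Set.Icc (-π) π, G i x := by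
  rw [← MeasureTheory.integral_indicator (measurableSet_box d)]
  have h : (box d).indicator (fun θ => ∏ i, G i (θ i))
      = fun θ => ∏ i, (Set.Icc (-π) π).indicator (G i) (θ i) := by
    funext θ
    by_cases hθ : θ ∈ box d
    · rw [Set.indicator_of_mem hθ]
      refine Finset.prod_congr rfl fun i _ => ?_
      rw [Set.indicator_of_mem (hθ i (Set.mem_univ i))]
    · rw [Set.indicator_of_notMem hθ]
      obtain ⟨i, hi⟩ : ∃ i, θ i ∉ Set.Icc (-π) π := by
        simp only [box, Set.mem_univ_pi, not_forall] at hθ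
        exact hθ
      exact (Finset.prod_eq_zero (Finset.mem_univ i) (Set.indicator_of_notMem hi _)).symm
  rw [h,
    MeasureTheory.integral_fintype_prod_volume_eq_prod (𝕜 := ℝ)
      (fun i x => (Set.Icc (-π) π).indicator (G i) x)]
  exact Finset.prod_congr rfl fun i _ =>
    MeasureTheory.integral_indicator measurableSet_Icc


lemma KK_zero (d : ℕ) (θ : Fin d → ℝ) : KK d 0 θ = 1 := by
  simp [KK]

lemma KK_add_KK (d : ℕ) (z : Fin d → ℤ) (i : Fin d) (θ : Fin d → ℝ) :
    KK d (z - Pi.single i 1) θ + KK d (z + Pi.single i 1) θ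
      = 2 * Real.cos (θ i) * KK d z θ := by
  unfold KK
  rw [← Finset.mul_prod_erase Finset.univ _ (Finset.mem_univ i),
      ← Finset.mul_prod_erase Finset.univ _ (Finset.mem_univ i),
      ← Finset.mul_prod_erase Finset.univ (fun j => Real.cos (θ j * (z j : ℝ)))
        (Finset.mem_univ i)]
  have e1 : ∀ j ∈ Finset.univ.erase i,
      Real.cos (θ j * (((z - Pi.single i 1 : Fin d → ℤ) j : ℤ) : ℝ))
        = Real.cos (θ j * (z j : ℝ)) := by
    intro j hj
    have hne : j ≠ i := Finset.ne_of_mem_erase hj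
    simp [Pi.single_eq_of_ne hne]
  have e2 : ∀ j ∈ Finset.univ.erase i,
      Real.cos (θ j * (((z + Pi.single i 1 : Fin d → ℤ) j : ℤ) : ℝ))
        = Real.cos (θ j * (z j : ℝ)) := by
    intro j hj
    have hne : j ≠ i := Finset.ne_of_mem_erase hj
    simp [Pi.single_eq_of_ne hne]
  rw [Finset.prod_congr rfl e1, Finset.prod_congr rfl e2]
  have h1 : (((z - Pi.single i 1 : Fin d → ℤ) i : ℤ) : ℝ) = (z i : ℝ) - 1 := by
    simp [Pi.single_eq_same]
  have h2 : (((z + Pi.single i 1 : Fin d → ℤ) i : ℤ) : ℝ) = (z i : ℝ) + 1 := by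
    simp [Pi.single_eq_same]
  rw [h1, h2]
  have key : Real.cos (θ i * ((z i : ℝ) - 1)) + Real.cos (θ i * ((z i : ℝ) + 1))
      = 2 * Real.cos (θ i) * Real.cos (θ i * (z i : ℝ)) := by
    rw [show θ i * ((z i : ℝ) - 1) = θ i * (z i : ℝ) - θ i by ring,
        show θ i * ((z i : ℝ) + 1) = θ i * (z i : ℝ) + θ i by ring,
        Real.cos_sub, Real.cos_add]
    ring
  rw [← add_mul, key]; ring

lemma srwStep_eq (d : ℕ) (hd : 0 < d) (n : ℕ) (z : Fin d → ℤ) :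
    srwStep d n z = ((2 * π) ^ d)⁻¹ * ((d : ℝ) ^ n)⁻¹ *
      ∫ θ in box d, (psi d θ) ^ n * KK d z θ := by
  have hdR : (d : ℝ) ≠ 0 := Nat.cast_ne_zero.mpr hd.ne'
  have h2pi : ((2 * π) ^ d : ℝ) ≠ 0 := pow_ne_zero _ (by positivity)
  induction n generalizing z with
  | zero =>
    have hbase : ∫ θ in box d, KK d z θ = if z = 0 then (2 * π) ^ d else 0 := by
      rw [show (∫ θ in box d, KK d z θ)
          = ∫ θ in box d, ∏ i, Real.cos (θ i * (z i : ℝ)) from rfl]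
      rw [integral_box_prod d (fun i x => Real.cos (x * (z i : ℝ)))]
      by_cases hz : z = 0
      · subst hz
        rw [if_pos rfl,
          Finset.prod_congr rfl fun i (_ : i ∈ Finset.univ) => by
            simp only [Pi.zero_apply]
            rw [show ((0 : ℤ) : ℝ) = (((0 : ℤ) : ℤ) : ℝ) from rfl, integral_cos_int 0,
              if_pos rfl],
          Finset.prod_const]
        simp
      · obtain ⟨i, hi⟩ : ∃ i, z i ≠ 0 := by
          by_contra h; push_neg at h; exact hz (funext h)
        rw [if_neg hz]
        refine Finset.prod_eq_zero (Finset.mem_univ i) ?_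
        rw [integral_cos_int, if_neg hi]
    rw [show srwStep d 0 z = if z = 0 then (1 : ℝ) else 0 from rfl]
    simp only [pow_zero, inv_one, mul_one, one_mul]
    rw [hbase]
    by_cases hz : z = 0
    · rw [if_pos hz, if_pos hz, inv_mul_cancel₀ h2pi]
    · rw [if_neg hz, if_neg hz, mul_zero]
  | succ n ih =>
    have hKint : ∀ w : Fin d → ℤ,
        IntegrableOn (fun θ => psi d θ ^ n * KK d w θ) (box d) :=
      fun w => integrableOn_box (((cont_psi d).pow n).mul (cont_KK d w))
    have hKint2 : ∀ i : Fin d,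
        IntegrableOn (fun θ => psi d θ ^ n * (2 * Real.cos (θ i) * KK d z θ)) (box d) :=
      fun i => integrableOn_box
        (((cont_psi d).pow n).mul
          ((continuous_const.mul (Real.continuous_cos.comp (continuous_apply i))).mul
            (cont_KK d z)))
    set c : ℝ := ((2 * π) ^ d)⁻¹ * ((d : ℝ) ^ n)⁻¹ with hc
    have key : ∀ i : Fin d,
        srwStep d n (z - Pi.single i 1) + srwStep d n (z + Pi.single i 1)
          = c * ∫ θ in box d, psi d θ ^ n * (2 * Real.cos (θ i) * KK d z θ) := by
      intro i
      have hadd : (∫ θ in box d, psi d θ ^ n * KK d (z - Pi.single i 1) θ) +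
            (∫ θ in box d, psi d θ ^ n * KK d (z + Pi.single i 1) θ)
          = ∫ θ in box d, psi d θ ^ n * (2 * Real.cos (θ i) * KK d z θ) := by
        rw [← MeasureTheory.integral_add (hKint _) (hKint _)]
        refine MeasureTheory.setIntegral_congr_fun (measurableSet_box d) fun θ _ => ?_
        show psi d θ ^ n * KK d (z - Pi.single i 1) θ +
            psi d θ ^ n * KK d (z + Pi.single i 1) θ = _
        rw [← mul_add, KK_add_KK]
      rw [ih, ih, ← mul_add, hadd]
    have hsum : ∀ θ : Fin d → ℝ,
        ∑ i : Fin d, psi d θ ^ n * (2 * Real.cos (θ i) * KK d z θ)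
          = 2 * (psi d θ ^ (n + 1) * KK d z θ) := by
      intro θ
      have h1 : ∑ i : Fin d, psi d θ ^ n * (2 * Real.cos (θ i) * KK d z θ)
          = (∑ i : Fin d, Real.cos (θ i)) * (2 * psi d θ ^ n * KK d z θ) := by
        rw [Finset.sum_mul]
        exact Finset.sum_congr rfl fun i _ => by ring
      rw [h1, show (∑ i : Fin d, Real.cos (θ i)) = psi d θ from rfl, pow_succ]
      ring
    rw [show srwStep d (n + 1) z = (2 * d : ℝ)⁻¹ *
        ∑ i : Fin d, (srwStep d n (z - Pi.single i 1) + srwStep d n (z + Pi.single i 1))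
      from rfl]
    rw [Finset.sum_congr rfl fun i _ => key i, ← Finset.mul_sum,
      ← MeasureTheory.integral_finset_sum _ fun i _ => hKint2 i,
      MeasureTheory.setIntegral_congr_fun (measurableSet_box d) fun θ _ => hsum θ,
      MeasureTheory.integral_const_mul, hc]
    field_simp
    ring


lemma srwP_eq (d : ℕ) (hd : 0 < d) (t : ℝ) (ht : 0 < t) :
    srwP d t 0 0
      = ((2 * π)⁻¹ * ∫ x in Set.Icc (-π) π, Real.exp (2 * t * (Real.cos x - 1))) ^ d := by
  have hdR : (d : ℝ) ≠ 0 := Nat.cast_ne_zero.mpr hd.ne'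
  have h2pi : ((2 * π) ^ d : ℝ) ≠ 0 := pow_ne_zero _ (by positivity)
  set F : ℕ → (Fin d → ℝ) → ℝ :=
    fun n θ => Real.exp (-(2 * d) * t) * (2 * t) ^ n / n.factorial * psi d θ ^ n with hF
  have hpow : ∀ n : ℕ, ((2 : ℝ) * d * t) ^ n = (2 * t) ^ n * (d : ℝ) ^ n := by
    intro n
    rw [show (2 : ℝ) * d * t = (2 * t) * d by ring, mul_pow]
  have hterm : ∀ n : ℕ,
      Real.exp (-(2 * d) * t) * (2 * d * t) ^ n / n.factorial * srwStep d n 0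
        = ((2 * π) ^ d)⁻¹ * ∫ θ in box d, F n θ := by
    intro n
    rw [srwStep_eq d hd n 0]
    simp only [KK_zero, mul_one, hF]
    rw [MeasureTheory.integral_const_mul]
    have hdn : ((d : ℝ) ^ n) ≠ 0 := pow_ne_zero _ hdR
    have hfac : ((n.factorial : ℝ)) ≠ 0 := Nat.cast_ne_zero.mpr n.factorial_ne_zero
    field_simp [hpow n]
    ring
  have hS : HasSum (fun n => ∫ θ in box d, F n θ)
      (∫ θ in box d, Real.exp (-(2 * d) * t) * Real.exp (2 * t * psi d θ)) := by
    refine MeasureTheory.hasSum_integral_of_dominated_convergence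
      (bound := fun n _ => Real.exp (-(2 * d) * t) * (2 * d * t) ^ n / n.factorial)
      (fun n => (continuous_const.mul ((cont_psi d).pow n)).aestronglyMeasurable)
      (fun n => Filter.Eventually.of_forall fun θ => ?_)
      (Filter.Eventually.of_forall fun θ => ?_) ?_
      (Filter.Eventually.of_forall fun θ => ?_)
    · -- bound
      have hc0 : 0 ≤ Real.exp (-(2 * d) * t) * (2 * t) ^ n / n.factorial := by positivity
      rw [hF]
      simp only
      rw [Real.norm_eq_abs, abs_mul, abs_of_nonneg hc0, abs_pow]
      calc Real.exp (-(2 * d) * t) * (2 * t) ^ n / n.factorial * |psi d θ| ^ n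
          ≤ Real.exp (-(2 * d) * t) * (2 * t) ^ n / n.factorial * (d : ℝ) ^ n := by
            exact mul_le_mul_of_nonneg_left
              (pow_le_pow_left₀ (abs_nonneg _) (abs_psi_le d θ) n) hc0
        _ = Real.exp (-(2 * d) * t) * (2 * d * t) ^ n / n.factorial := by
            rw [hpow n]; ring
    · -- summable
      have h := (Real.summable_pow_div_factorial (2 * d * t)).mul_left
        (Real.exp (-(2 * d) * t))
      simpa [mul_div_assoc] using h
    · -- integrable bound
      exact MeasureTheory.integrableOn_const (isCompact_box d).measure_lt_top.ne
    · -- limit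
      have h := NormedSpace.expSeries_div_hasSum_exp (2 * t * psi d θ)
      rw [← Real.exp_eq_exp_ℝ] at h
      have h2 := h.mul_left (Real.exp (-(2 * d) * t))
      have heq : (fun n => F n θ)
          = fun n => Real.exp (-(2 * d) * t) * ((2 * t * psi d θ) ^ n / n.factorial) := by
        funext n
        rw [hF]
        simp only
        rw [mul_pow]
        ring
      rw [heq]
      exact h2
  have hprod : (∫ θ in box d, Real.exp (-(2 * d) * t) * Real.exp (2 * t * psi d θ))
      = (∫ x in Set.Icc (-π) π, Real.exp (2 * t * (Real.cos x - 1))) ^ d := by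
    have hptwise : ∀ θ : Fin d → ℝ,
        Real.exp (-(2 * d) * t) * Real.exp (2 * t * psi d θ)
          = ∏ i, Real.exp (2 * t * (Real.cos (θ i) - 1)) := by
      intro θ
      rw [← Real.exp_add, ← Real.exp_sum]
      congr 1
      have : ∑ i : Fin d, 2 * t * (Real.cos (θ i) - 1)
          = 2 * t * (∑ i : Fin d, Real.cos (θ i)) - d * (2 * t) := by
        simp only [mul_sub, mul_one]
        rw [Finset.sum_sub_distrib, ← Finset.mul_sum, Finset.sum_const, Finset.card_univ,
          Fintype.card_fin, nsmul_eq_mul]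
      rw [this, show (∑ i : Fin d, Real.cos (θ i)) = psi d θ from rfl]
      ring
    rw [MeasureTheory.setIntegral_congr_fun (measurableSet_box d) fun θ _ => hptwise θ,
      integral_box_prod d (fun _ x => Real.exp (2 * t * (Real.cos x - 1))),
      Finset.prod_const, Finset.card_univ, Fintype.card_fin]
  calc srwP d t 0 0
      = ∑' n : ℕ, (((2 * π) ^ d)⁻¹ * ∫ θ in box d, F n θ) := by
        unfold srwP
        rw [sub_zero]
        exact tsum_congr hterm
    _ = ((2 * π) ^ d)⁻¹ * ∑' n : ℕ, ∫ θ in box d, F n θ := tsum_mul_left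
    _ = ((2 * π) ^ d)⁻¹
        * (∫ x in Set.Icc (-π) π, Real.exp (2 * t * (Real.cos x - 1))) ^ d := by
        rw [hS.tsum_eq, hprod]
    _ = ((2 * π)⁻¹ * ∫ x in Set.Icc (-π) π, Real.exp (2 * t * (Real.cos x - 1))) ^ d := by
        rw [mul_pow (2 * π)⁻¹, inv_pow]


lemma oneD_integrable (t : ℝ) :
    IntegrableOn (fun x => Real.exp (2 * t * (Real.cos x - 1))) (Set.Icc (-π) π) :=
  (Real.continuous_exp.comp
      (continuous_const.mul (Real.continuous_cos.sub continuous_const))).continuousOn.integrableOn_compact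
    isCompact_Icc

lemma oneD_lower (t : ℝ) (ht : 1 ≤ t) :
    2 * (Real.exp 1)⁻¹ * (Real.sqrt t)⁻¹
      ≤ ∫ x in Set.Icc (-π) π, Real.exp (2 * t * (Real.cos x - 1)) := by
  have ht0 : 0 < t := lt_of_lt_of_le one_pos ht
  set s := (Real.sqrt t)⁻¹ with hs
  have hsq : 1 ≤ Real.sqrt t := by
    rw [show (1 : ℝ) = Real.sqrt 1 by simp]
    exact Real.sqrt_le_sqrt ht
  have hsq0 : 0 < Real.sqrt t := lt_of_lt_of_le one_pos hsq
  have hs0 : 0 < s := inv_pos.mpr hsq0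
  have hs1 : s ≤ 1 := by rw [hs]; exact inv_le_one_of_one_le₀ hsq
  have hsub : Set.Icc (-s) s ⊆ Set.Icc (-π) π :=
    Set.Icc_subset_Icc (by linarith [pi_gt_three]) (by linarith [pi_gt_three])
  have hpt : ∀ x ∈ Set.Icc (-s) s,
      Real.exp (-1) ≤ Real.exp (2 * t * (Real.cos x - 1)) := by
    intro x hx
    apply Real.exp_le_exp.mpr
    have hcos := Real.one_sub_sq_div_two_le_cos (x := x)
    have habs : |x| ≤ s := abs_le.mpr ⟨hx.1, hx.2⟩
    have hx2 : x ^ 2 ≤ s ^ 2 := by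
      rw [← sq_abs]
      exact pow_le_pow_left₀ (abs_nonneg x) habs 2
    have hts : t * s ^ 2 = 1 := by
      rw [hs, inv_pow, Real.sq_sqrt ht0.le]
      field_simp
    nlinarith
  have hconst : (∫ _x in Set.Icc (-s) s, Real.exp (-1)) = Real.exp (-1) * (2 * s) := by
    rw [MeasureTheory.setIntegral_const, Real.volume_real_Icc_of_le (by linarith), smul_eq_mul]
    ring
  calc 2 * (Real.exp 1)⁻¹ * s = Real.exp (-1) * (2 * s) := by rw [Real.exp_neg]; ring
    _ = ∫ _x in Set.Icc (-s) s, Real.exp (-1) := hconst.symm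
    _ ≤ ∫ x in Set.Icc (-s) s, Real.exp (2 * t * (Real.cos x - 1)) := by
        refine MeasureTheory.setIntegral_mono_on
          (MeasureTheory.integrableOn_const (ne_of_lt ?_))
          ((oneD_integrable t).mono_set hsub) measurableSet_Icc hpt
        rw [Real.volume_Icc]
        exact ENNReal.ofReal_lt_top
    _ ≤ ∫ x in Set.Icc (-π) π, Real.exp (2 * t * (Real.cos x - 1)) :=
        MeasureTheory.setIntegral_mono_set (oneD_integrable t)
          (Filter.Eventually.of_forall fun x => (Real.exp_pos _).le)
          (HasSubset.Subset.eventuallyLE hsub)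

lemma oneD_upper (t : ℝ) (ht : 1 ≤ t) :
    (∫ x in Set.Icc (-π) π, Real.exp (2 * t * (Real.cos x - 1)))
      ≤ Real.sqrt (π ^ 3 / 4) * (Real.sqrt t)⁻¹ := by
  have ht0 : 0 < t := lt_of_lt_of_le one_pos ht
  have hπ := pi_pos
  set b := 4 * t / π ^ 2 with hb
  have hb0 : 0 < b := by positivity
  have hpt : ∀ x ∈ Set.Icc (-π) π,
      Real.exp (2 * t * (Real.cos x - 1)) ≤ Real.exp (-b * x ^ 2) := by
    intro x hx
    apply Real.exp_le_exp.mpr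
    have habs : |x| ≤ π := abs_le.mpr ⟨hx.1, hx.2⟩
    have hcos := Real.cos_le_one_sub_mul_cos_sq habs
    have hkey : 2 * t * (Real.cos x - 1) ≤ 2 * t * (-(2 / π ^ 2 * x ^ 2)) :=
      mul_le_mul_of_nonneg_left (by linarith) (by linarith)
    calc 2 * t * (Real.cos x - 1) ≤ 2 * t * (-(2 / π ^ 2 * x ^ 2)) := hkey
      _ = -b * x ^ 2 := by rw [hb]; ring
  calc (∫ x in Set.Icc (-π) π, Real.exp (2 * t * (Real.cos x - 1)))
      ≤ ∫ x in Set.Icc (-π) π, Real.exp (-b * x ^ 2) :=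
        MeasureTheory.setIntegral_mono_on (oneD_integrable t)
          (integrable_exp_neg_mul_sq hb0).integrableOn measurableSet_Icc hpt
    _ ≤ ∫ x : ℝ, Real.exp (-b * x ^ 2) :=
        MeasureTheory.setIntegral_le_integral (integrable_exp_neg_mul_sq hb0)
          (Filter.Eventually.of_forall fun x => (Real.exp_pos _).le)
    _ = Real.sqrt (π / b) := integral_gaussian b
    _ = Real.sqrt (π ^ 3 / 4) * (Real.sqrt t)⁻¹ := by
        rw [show π / b = (π ^ 3 / 4) * t⁻¹ by rw [hb]; field_simp,
          Real.sqrt_mul (by positivity), Real.sqrt_inv]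

end SRWAux

/-- Local CLT-type on-diagonal bounds: `p_t(𝟎,𝟎) = Θ(t^{-d/2})` as `t → ∞`. -/
theorem srwP_diagonal_asymptotics (d : ℕ) (hd : 1 ≤ d) :
    ∃ c C : ℝ, 0 < c ∧ c ≤ C ∧ ∀ t : ℝ, 1 ≤ t →
      c * t ^ (-(d : ℝ) / 2) ≤ srwP d t 0 0 ∧ srwP d t 0 0 ≤ C * t ^ (-(d : ℝ) / 2) := by
  classical
  have hπ := Real.pi_pos
  set c1 : ℝ := (π * Real.exp 1)⁻¹ with hc1
  set C1 : ℝ := (2 * π)⁻¹ * Real.sqrt (π ^ 3 / 4) with hC1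
  have hc1pos : 0 < c1 := by positivity
  have H : ∀ t : ℝ, 1 ≤ t →
      c1 ^ d * t ^ (-(d : ℝ) / 2) ≤ srwP d t 0 0 ∧
        srwP d t 0 0 ≤ C1 ^ d * t ^ (-(d : ℝ) / 2) := by
    intro t ht
    have ht0 : 0 < t := lt_of_lt_of_le one_pos ht
    set s := (Real.sqrt t)⁻¹ with hs
    have hsq0 : 0 < Real.sqrt t := Real.sqrt_pos.mpr ht0
    have hs0 : 0 < s := inv_pos.mpr hsq0
    set I := ∫ x in Set.Icc (-π) π, Real.exp (2 * t * (Real.cos x - 1)) with hI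
    have hI0 : 0 ≤ I :=
      MeasureTheory.setIntegral_nonneg measurableSet_Icc fun x _ => (Real.exp_pos _).le
    have hrpow : t ^ (-(d : ℝ) / 2) = s ^ d := by
      rw [hs, Real.sqrt_eq_rpow, ← Real.rpow_neg ht0.le,
        ← Real.rpow_natCast (t ^ (-(1 / 2 : ℝ))) d, ← Real.rpow_mul ht0.le]
      congr 1
      ring
    have heq := SRWAux.srwP_eq d hd t ht0
    have hlow : c1 * s ≤ (2 * π)⁻¹ * I := by
      have h1 := SRWAux.oneD_lower t ht
      calc c1 * s = (2 * π)⁻¹ * (2 * (Real.exp 1)⁻¹ * s) := by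
            rw [hc1]
            field_simp
          _ ≤ (2 * π)⁻¹ * I := by
            apply mul_le_mul_of_nonneg_left h1 (by positivity)
    have hup : (2 * π)⁻¹ * I ≤ C1 * s := by
      have h1 := SRWAux.oneD_upper t ht
      calc (2 * π)⁻¹ * I ≤ (2 * π)⁻¹ * (Real.sqrt (π ^ 3 / 4) * s) :=
            mul_le_mul_of_nonneg_left h1 (by positivity)
        _ = C1 * s := by rw [hC1]; ring
    constructor
    · rw [heq, hrpow, ← mul_pow]
      exact pow_le_pow_left₀ (by positivity) hlow d
    · rw [heq, hrpow, ← mul_pow]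
      exact pow_le_pow_left₀ (by positivity) hup d
  refine ⟨c1 ^ d, C1 ^ d, pow_pos hc1pos d, ?_, H⟩
  have h1 := H 1 le_rfl
  have hone : (1 : ℝ) ^ (-(d : ℝ) / 2) = 1 := Real.one_rpow _
  rw [hone, mul_one, mul_one] at h1
  exact le_trans h1.1 h1.2
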